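/- arXiv:0905.3359 — 2 statements merged into one kernel-verified Lean document; each statement's English description precedes it below -/
import Mathlib

section
/- Given a graph G and an internal monotone connected node-clearing search S of G using K searchers, there exists an edge-clearing search S' of G using at most K+1 searchers. -/
open SimpleGraph

/-- A move in a graph-search game: place a searcher, remove a searcher,
or slide a searcher along an edge. -/
inductive GMove (V : Type*) where
  | place (v : V)
  | remove (v : V)
  | slide (u v : V)

namespace GMove

/-- The node (if any) entered by the move. -/
def target {V : Type*} : GMove V → Option V
  | place v => some v
  | remove _ => none
  | slide _ v => some v

/-- The edge (if any) traversed by the move. -/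
def traversed {V : Type*} : GMove V → Option (Sym2 V)
  | slide u v => some s(u, v)
  | _ => none

end GMove

variable {V : Type*}

open Classical in
/-- Number of searchers located at each node after `t` moves
(the move between time `t` and `t+1` is `S t`). -/
noncomputable def occ (S : ℕ → GMove V) : ℕ → V → ℕ
  | 0 => fun _ => 0
  | t + 1 => fun x =>
    match S t with
    | .place v => if x = v then occ S t x + 1 else occ S t x
    | .remove v => if x = v then occ S t x - 1 else occ S t x
    | .slide u v =>
        if x = v then occ S t x + 1 else if x = u then occ S t x - 1 else occ S t x

/-- Number of searchers inside the graph after `t` moves. -/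
def sn (S : ℕ → GMove V) : ℕ → ℕ
  | 0 => 0
  | t + 1 =>
    match S t with
    | .place _ => sn S t + 1
    | .remove _ => sn S t - 1
    | .slide _ _ => sn S t

/-- A legal search schedule on `G`: slides go along edges starting from an occupied
node, and removals take place at occupied nodes. -/
def Legal (G : SimpleGraph V) (S : ℕ → GMove V) : Prop :=
  ∀ t, match S t with
    | .place _ => True
    | .remove v => 0 < occ S t v
    | .slide u v => G.Adj u v ∧ 0 < occ S t u

/-- An internal schedule never removes searchers from the graph. -/
def Internal (S : ℕ → GMove V) : Prop := ∀ t v, S t ≠ GMove.remove v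

/-- A rooted schedule places searchers only at the root `r`. -/
def RootedAt (S : ℕ → GMove V) (r : V) : Prop := ∀ t v, S t = GMove.place v → v = r

/-- The set of n-dirty nodes of the node game: initially all nodes are n-dirty;
after a move, a node is n-dirty iff it is joined to a previously n-dirty node by a
path all of whose nodes are unguarded. -/
def ndirty (G : SimpleGraph V) (S : ℕ → GMove V) : ℕ → Set V
  | 0 => Set.univ
  | t + 1 =>
    { u | ∃ w, w ∈ ndirty G S t ∧ ∃ p : G.Walk u w, ∀ x ∈ p.support, occ S (t + 1) x = 0 }

/-- The set of n-dirty edges: edges incident to an n-dirty node. -/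
def nEdgeDirty (G : SimpleGraph V) (S : ℕ → GMove V) (t : ℕ) : Set (Sym2 V) :=
  { e | e ∈ G.edgeSet ∧ ∃ v ∈ e, v ∈ ndirty G S t }

/-- The set of e-dirty edges of the edge game: initially all edges are e-dirty;
a traversed edge is cleared, and an edge is recontaminated when joined to a
(still) e-dirty edge by a path whose interior nodes are unguarded. -/
def edirty (G : SimpleGraph V) (S : ℕ → GMove V) : ℕ → Set (Sym2 V)
  | 0 => G.edgeSet
  | t + 1 =>
    (edirty G S t \ { e | (S t).traversed = some e }) ∪
      { e | ∃ x y q q', e = s(x, y) ∧ G.Adj x y ∧ G.Adj q q' ∧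
          (s(q, q') ∈ edirty G S t ∧ (S t).traversed ≠ some s(q, q')) ∧
          ∃ p : G.Walk y q, ∀ z ∈ p.support, occ S (t + 1) z = 0 }

/-- A node is e-dirty iff it is unguarded and adjacent to an e-dirty edge. -/
def edirtyNode (G : SimpleGraph V) (S : ℕ → GMove V) (t : ℕ) : Set V :=
  { v | occ S t v = 0 ∧ ∃ e ∈ edirty G S t, v ∈ e }

/-- The set of m-dirty edges of the mixed edge game: as in the edge game, but in
addition an edge both of whose endpoints are guarded becomes m-clear. -/
def mdirty (G : SimpleGraph V) (S : ℕ → GMove V) : ℕ → Set (Sym2 V)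
  | 0 => G.edgeSet
  | t + 1 =>
    (mdirty G S t \
        ({ e | (S t).traversed = some e } ∪ { e | ∀ v ∈ e, 0 < occ S (t + 1) v })) ∪
      { e | ∃ x y q q', e = s(x, y) ∧ G.Adj x y ∧ G.Adj q q' ∧
          (s(q, q') ∈ mdirty G S t ∧ (S t).traversed ≠ some s(q, q') ∧
            ¬ (∀ v ∈ (s(q, q') : Sym2 V), 0 < occ S (t + 1) v)) ∧
          ∃ p : G.Walk y q, ∀ z ∈ p.support, occ S (t + 1) z = 0 }

/-- A node is m-dirty iff it is unguarded and adjacent to an m-dirty edge. -/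
def mdirtyNode (G : SimpleGraph V) (S : ℕ → GMove V) (t : ℕ) : Set V :=
  { v | occ S t v = 0 ∧ ∃ e ∈ mdirty G S t, v ∈ e }

/-- The n-clear subgraph: n-clear nodes and all edges of `G` between them. -/
def nclearSubgraph (G : SimpleGraph V) (S : ℕ → GMove V) (t : ℕ) : G.Subgraph where
  verts := (ndirty G S t)ᶜ
  Adj a b := G.Adj a b ∧ a ∉ ndirty G S t ∧ b ∉ ndirty G S t
  adj_sub h := h.1
  edge_vert h := h.2.1
  symm := ⟨fun a b h => ⟨h.1.symm, h.2.2, h.2.1⟩⟩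

/-- The e-clear subgraph: e-clear nodes and e-clear edges. -/
def eclearSubgraph (G : SimpleGraph V) (S : ℕ → GMove V) (t : ℕ) : G.Subgraph where
  verts := { v | v ∉ edirtyNode G S t } ∪ { v | ∃ e ∈ G.edgeSet \ edirty G S t, v ∈ e }
  Adj a b := G.Adj a b ∧ s(a, b) ∈ G.edgeSet \ edirty G S t
  adj_sub h := h.1
  edge_vert {a b} h := Or.inr ⟨s(a, b), h.2, Sym2.mem_mk_left a b⟩
  symm := ⟨fun a b h => ⟨h.1.symm, by rw [Sym2.eq_swap]; exact h.2⟩⟩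
section Aux
variable {V : Type*} {G : SimpleGraph V} {S S' : ℕ → GMove V}

open Classical in
lemma occ_succ_place {t : ℕ} {v : V} (h : S t = .place v) (x : V) :
    occ S (t+1) x = if x = v then occ S t x + 1 else occ S t x := by
  simp [occ, h]

open Classical in
lemma occ_succ_remove {t : ℕ} {v : V} (h : S t = .remove v) (x : V) :
    occ S (t+1) x = if x = v then occ S t x - 1 else occ S t x := by
  simp [occ, h]

open Classical in
lemma occ_succ_slide {t : ℕ} {u v : V} (h : S t = .slide u v) (x : V) :
    occ S (t+1) x = if x = v then occ S t x + 1
      else if x = u then occ S t x - 1 else occ S t x := by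
  simp [occ, h]

lemma sn_succ_place {t : ℕ} {v : V} (h : S t = .place v) :
    sn S (t+1) = sn S t + 1 := by simp [sn, h]

lemma sn_succ_remove {t : ℕ} {v : V} (h : S t = .remove v) :
    sn S (t+1) = sn S t - 1 := by simp [sn, h]

lemma sn_succ_slide {t : ℕ} {u v : V} (h : S t = .slide u v) :
    sn S (t+1) = sn S t := by simp [sn, h]

lemma ndirty_succ (G : SimpleGraph V) (S : ℕ → GMove V) (t : ℕ) :
    ndirty G S (t+1) =
      { u | ∃ w, w ∈ ndirty G S t ∧ ∃ p : G.Walk u w, ∀ x ∈ p.support, occ S (t + 1) x = 0 } :=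
  rfl

lemma edirty_succ (G : SimpleGraph V) (S : ℕ → GMove V) (t : ℕ) :
    edirty G S (t+1) =
      (edirty G S t \ { e | (S t).traversed = some e }) ∪
      { e | ∃ x y q q', e = s(x, y) ∧ G.Adj x y ∧ G.Adj q q' ∧
          (s(q, q') ∈ edirty G S t ∧ (S t).traversed ≠ some s(q, q')) ∧
          ∃ p : G.Walk y q, ∀ z ∈ p.support, occ S (t + 1) z = 0 } :=
  rfl

lemma edirty_subset_edgeSet : ∀ t, edirty G S t ⊆ G.edgeSet := by
  intro t
  induction t with
  | zero => exact le_refl _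
  | succ t ih =>
    rw [edirty_succ]
    rintro e (⟨he, -⟩ | ⟨x, y, q, q', rfl, hxy, -⟩)
    · exact ih he
    · exact hxy

/-- nodes dirty at a positive time are unguarded. -/
lemma ndirty_unguarded {t : ℕ} {a : V} (h : a ∈ ndirty G S (t+1)) : occ S (t+1) a = 0 := by
  rw [ndirty_succ] at h
  obtain ⟨w, -, p, hp⟩ := h
  exact hp a p.start_mem_support

/-- a dirty node that stays unguarded stays dirty. -/
lemma ndirty_nil {t : ℕ} {a : V} (h : a ∈ ndirty G S t) (h0 : occ S (t+1) a = 0) :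
    a ∈ ndirty G S (t+1) := by
  rw [ndirty_succ]
  exact ⟨a, h, SimpleGraph.Walk.nil, by simp [h0]⟩

/-- an unguarded node adjacent to a dirty node is dirty. -/
lemma ndirty_extend {t : ℕ} {a b : V} (hab : G.Adj b a) (h : a ∈ ndirty G S (t+1))
    (h0 : occ S (t+1) b = 0) : b ∈ ndirty G S (t+1) := by
  rw [ndirty_succ] at h ⊢
  obtain ⟨w, hw, p, hp⟩ := h
  refine ⟨w, hw, SimpleGraph.Walk.cons hab p, ?_⟩
  intro x hx
  simp only [SimpleGraph.Walk.support_cons, List.mem_cons] at hx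
  rcases hx with hx | hx
  · subst hx; exact h0
  · exact hp x hx

/-- a node with an unguarded walk to a dirty node (evaluated at the same positive time)
is dirty. -/
lemma ndirty_walk_same {t : ℕ} {y c : V} (p : G.Walk y c) (hc : c ∈ ndirty G S (t+1))
    (hp : ∀ z ∈ p.support, occ S (t+1) z = 0) : y ∈ ndirty G S (t+1) := by
  rw [ndirty_succ] at hc ⊢
  obtain ⟨w, hw, pc, hpc⟩ := hc
  refine ⟨w, hw, p.append pc, ?_⟩
  intro x hx
  rw [SimpleGraph.Walk.mem_support_append_iff] at hx
  rcases hx with hx | hx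
  · exact hp x hx
  · exact hpc x hx

lemma guarded_not_ndirty (hL : Legal G S) {t : ℕ} {a : V} (h : 0 < occ S t a) :
    a ∉ ndirty G S t := by
  cases t with
  | zero => simp [occ] at h
  | succ t => exact fun hd => by simp [ndirty_unguarded hd] at h

lemma occ_support_finite (S : ℕ → GMove V) : ∀ t, {v | occ S t v ≠ 0}.Finite := by
  intro t
  induction t with
  | zero => simpa [occ] using Set.finite_empty
  | succ t ih =>
    rcases hmv : S t with v | v | ⟨u, v⟩
    · refine ((ih.union (Set.finite_singleton v)).subset ?_)
      intro x hx
      rw [Set.mem_setOf_eq, occ_succ_place hmv] at hx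
      by_cases hxv : x = v
      · exact Or.inr hxv
      · exact Or.inl (by simpa [hxv] using hx)
    · refine (ih.subset ?_)
      intro x hx
      rw [Set.mem_setOf_eq, occ_succ_remove hmv] at hx
      by_cases hxv : x = v
      · simp only [hxv, if_true] at hx
        simp only [Set.mem_setOf_eq, hxv]; omega
      · simpa [hxv] using hx
    · refine ((ih.union (Set.finite_singleton v)).subset ?_)
      intro x hx
      rw [Set.mem_setOf_eq, occ_succ_slide hmv] at hx
      by_cases hxv : x = v
      · exact Or.inr hxv
      · by_cases hxu : x = u
        · subst hxu
          rw [if_neg hxv, if_pos rfl] at hx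
          refine Or.inl ?_
          simp only [Set.mem_setOf_eq]; omega
        · exact Or.inl (by simpa [hxv, hxu] using hx)

end Aux
section Aux2
variable {V : Type*} {G : SimpleGraph V} {S S' : ℕ → GMove V}

/-- Edges both of whose endpoints are guarded at time `t` of the base search. -/
def Gd (S : ℕ → GMove V) (t : ℕ) : Set (Sym2 V) := {e | ∀ v ∈ e, 0 < occ S t v}


lemma place_no_vacate {t : ℕ} {v b : V} (hm : S t = .place v)
    (h1 : occ S (t + 1) b = 0) : occ S t b = 0 := by
  rw [occ_succ_place hm] at h1
  by_cases hbv : b = v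
  · rw [if_pos hbv] at h1; omega
  · rwa [if_neg hbv] at h1

lemma slide_vacated {t : ℕ} {w v b : V} (hm : S t = .slide w v)
    (h1 : occ S (t + 1) b = 0) (h0 : occ S t b ≠ 0) : b = w := by
  rw [occ_succ_slide hm] at h1
  by_cases hbv : b = v
  · rw [if_pos hbv] at h1; omega
  · rw [if_neg hbv] at h1
    by_cases hbw : b = w
    · exact hbw
    · rw [if_neg hbw] at h1; exact absurd h1 h0

lemma slide_gain {t : ℕ} {w v b : V} (hm : S t = .slide w v)
    (h1 : occ S (t + 1) b ≠ 0) (h0 : occ S t b = 0) : b = v := by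
  rw [occ_succ_slide hm] at h1
  by_cases hbv : b = v
  · exact hbv
  · rw [if_neg hbv] at h1
    by_cases hbw : b = w
    · rw [if_pos hbw, h0] at h1; omega
    · rw [if_neg hbw] at h1; exact absurd h0 h1

/-- Recontamination containment for auxiliary (phase) steps: when the occupancy at the
next moment dominates the base occupancy at base time `t`, any newly recontaminated edge
is incident to a node that is n-dirty at base time `t`. -/
lemma edirty_phase_step {t τ : ℕ}
    (hocc : ∀ x, occ S' (τ + 1) x = 0 → occ S t x = 0)
    (hsub : edirty G S' τ ⊆ nEdgeDirty G S t ∪ Gd S t) :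
    edirty G S' (τ + 1) ⊆
      (edirty G S' τ \ { e | (S' τ).traversed = some e }) ∪ nEdgeDirty G S t := by
  rw [edirty_succ]
  rintro e (h | h)
  · exact Or.inl h
  · obtain ⟨x, y, q, q', rfl, hxy, hqq', ⟨hqd, -⟩, p, hp⟩ := h
    refine Or.inr ⟨G.mem_edgeSet.2 hxy, y, Sym2.mem_mk_right x y, ?_⟩
    rcases hsub hqd with hN | hG
    · obtain ⟨-, c, hce, hc⟩ := hN
      cases t with
      | zero => simp [ndirty]
      | succ t₁ =>
        have hps : ∀ z ∈ p.support, occ S (t₁ + 1) z = 0 := fun z hz => hocc z (hp z hz)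
        rcases Sym2.mem_iff.1 hce with rfl | rfl
        · exact ndirty_walk_same p hc hps
        · exact ndirty_walk_same p
            (ndirty_extend hqq' hc (hps q p.end_mem_support)) hps
    · exfalso
      have h1 : occ S' (τ + 1) q = 0 := hp q p.end_mem_support
      have h2 := hG q (Sym2.mem_mk_left q q')
      rw [hocc q h1] at h2
      exact Nat.lt_irrefl 0 h2

/-- In the node game, a surviving dirty edge with an n-dirty endpoint remains
n-dirty or becomes guarded at both endpoints after the base move. -/
lemma old_edge_ndirty_case {t : ℕ} {a b : V} (hadj : G.Adj a b) (ha : a ∈ ndirty G S t)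
    (hsurv : (S t).traversed ≠ some s(a, b)) (hnr : ∀ v, S t ≠ .remove v) :
    s(a, b) ∈ nEdgeDirty G S (t + 1) ∪ Gd S (t + 1) := by
  by_cases ha1 : a ∈ ndirty G S (t + 1)
  · exact Or.inl ⟨G.mem_edgeSet.2 hadj, a, Sym2.mem_mk_left a b, ha1⟩
  · have hga : occ S (t + 1) a ≠ 0 := fun h0 => ha1 (ndirty_nil ha h0)
    by_cases hb1 : b ∈ ndirty G S (t + 1)
    · exact Or.inl ⟨G.mem_edgeSet.2 hadj, b, Sym2.mem_mk_right a b, hb1⟩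
    · by_cases hgb : occ S (t + 1) b = 0
      · exfalso
        have hbt : b ∉ ndirty G S t := fun hbt => hb1 (ndirty_nil hbt hgb)
        cases t with
        | zero => exact hbt (by simp [ndirty])
        | succ t₁ =>
          have ha0 : occ S (t₁ + 1) a = 0 := ndirty_unguarded ha
          by_cases hb0 : occ S (t₁ + 1) b = 0
          · exact hbt (ndirty_extend hadj.symm ha hb0)
          · rcases hm : S (t₁ + 1) with v | v | ⟨w, v⟩
            · exact hb0 (place_no_vacate hm hgb)
            · exact hnr v hm
            · have hbw : b = w := slide_vacated hm hgb hb0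
              have hav : a = v := slide_gain hm hga ha0
              refine hsurv ?_
              rw [hm]
              show some s(w, v) = some s(a, b)
              rw [hav, hbw, Sym2.eq_swap]
      · refine Or.inr fun v hv => ?_
        rcases Sym2.mem_iff.1 hv with rfl | rfl <;> omega

/-- The key preservation lemma for the base moves: executing the base move `S t`
at auxiliary time `τ` keeps dirty edges inside `nEdgeDirty ∪ Gd` at base time `t+1`,
provided all guarded-guarded edges at the move's source have already been cleared. -/
lemma edirty_base_step {t τ : ℕ}
    (hmv : S' τ = S t)
    (hnr : ∀ v, S t ≠ .remove v)
    (hocc1 : ∀ x, occ S' (τ + 1) x = occ S (t + 1) x)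
    (hsub : edirty G S' τ ⊆ nEdgeDirty G S t ∪ Gd S t)
    (hX : ∀ w v, S t = .slide w v → ∀ z, G.Adj w z → 0 < occ S t z →
      s(w, z) ∉ edirty G S' τ) :
    edirty G S' (τ + 1) ⊆ nEdgeDirty G S (t + 1) ∪ Gd S (t + 1) := by
  rw [edirty_succ]
  rintro e (⟨he, hes⟩ | ⟨x, y, q, q', rfl, hxy, hqq', ⟨hqd, hnt⟩, p, hp⟩)
  · -- surviving old edges
    rw [hmv] at hes
    rcases hsub he with hN | hG
    · obtain ⟨heE, c, hce, hc⟩ := hN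
      induction e using Sym2.ind with
      | _ a b =>
        rcases Sym2.mem_iff.1 hce with rfl | rfl
        · exact old_edge_ndirty_case (G.mem_edgeSet.1 heE) hc hes hnr
        · rw [Sym2.eq_swap]
          rw [Sym2.eq_swap] at hes
          exact old_edge_ndirty_case (G.mem_edgeSet.1 heE).symm hc hes hnr
    · induction e using Sym2.ind with
      | _ a b =>
        have hadj : G.Adj a b := G.mem_edgeSet.1 (edirty_subset_edgeSet _ he)
        rcases hm : S t with v | v | ⟨w, v⟩
        · refine Or.inr fun z hz => ?_
          have := hG z hz
          rw [occ_succ_place hm]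
          split <;> omega
        · exact absurd hm (hnr v)
        · by_cases hwE : w ∈ s(a, b)
          · exfalso
            rcases Sym2.mem_iff.1 hwE with rfl | rfl
            · exact hX w v hm b hadj (hG b (Sym2.mem_mk_right w b)) he
            · refine hX w v hm a hadj.symm (hG a (Sym2.mem_mk_left a w)) ?_
              rwa [Sym2.eq_swap]
          · refine Or.inr fun z hz => ?_
            have hzw : z ≠ w := fun h => hwE (h ▸ hz)
            have := hG z hz
            rw [occ_succ_slide hm, if_neg hzw]
            split <;> omega
  · -- recontaminated edges
    refine Or.inl ⟨G.mem_edgeSet.2 hxy, y, Sym2.mem_mk_right x y, ?_⟩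
    rw [hmv] at hnt
    have hps : ∀ z ∈ p.support, occ S (t + 1) z = 0 := fun z hz => (hocc1 z) ▸ hp z hz
    have hq1 : occ S (t + 1) q = 0 := hps q p.end_mem_support
    rcases hsub hqd with hN | hG
    · obtain ⟨-, c, hce, hc⟩ := hN
      by_cases hq : q ∈ ndirty G S t
      · rw [ndirty_succ]
        exact ⟨q, hq, p, hps⟩
      · have hc' : q' ∈ ndirty G S t := by
          rcases Sym2.mem_iff.1 hce with rfl | rfl
          · exact absurd hc hq
          · exact hc
        by_cases hq'1 : occ S (t + 1) q' = 0
        · rw [ndirty_succ]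
          refine ⟨q', hc', p.append (SimpleGraph.Walk.cons hqq' SimpleGraph.Walk.nil), ?_⟩
          intro z hz
          rw [SimpleGraph.Walk.mem_support_append_iff] at hz
          rcases hz with hz | hz
          · exact hps z hz
          · simp only [SimpleGraph.Walk.support_cons, SimpleGraph.Walk.support_nil,
              List.mem_cons, List.mem_singleton] at hz
            rcases hz with rfl | rfl | h
            · exact hq1
            · exact hq'1
            · cases h
        · cases t with
          | zero => exact absurd (Set.mem_univ q) hq
          | succ t₁ =>
            exfalso
            have hq'0 : occ S (t₁ + 1) q' = 0 := ndirty_unguarded hc'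
            by_cases hq0 : occ S (t₁ + 1) q = 0
            · exact hq (ndirty_extend hqq' hc' hq0)
            · rcases hm : S (t₁ + 1) with v | v | ⟨w, v⟩
              · exact hq0 (place_no_vacate hm hq1)
              · exact hnr v hm
              · have hqw : q = w := slide_vacated hm hq1 hq0
                have hq'v : q' = v := slide_gain hm hq'1 hq'0
                rw [hm] at hnt
                exact hnt (by rw [hqw, hq'v]; rfl)
    · exfalso
      have hqg := hG q (Sym2.mem_mk_left q q')
      rcases hm : S t with v | v | ⟨w, v⟩
      · have := place_no_vacate hm hq1
        omega
      · exact hnr v hm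
      · have hqw : q = w := slide_vacated hm hq1 (by omega)
        subst hqw
        exact hX q v hm q' hqq' (hG q' (Sym2.mem_mk_right q q')) hqd

end Aux2
section Aux3
variable {V : Type*} {G : SimpleGraph V} {S S' : ℕ → GMove V}

/-- `Sched S' a l` means the schedule `S'` performs exactly the moves of `l`
starting at time `a`. -/
def Sched (S' : ℕ → GMove V) : ℕ → List (GMove V) → Prop
  | _, [] => True
  | a, m :: l => S' a = m ∧ Sched S' (a + 1) l

lemma sched_append {a : ℕ} {l₁ l₂ : List (GMove V)} (h : Sched S' a (l₁ ++ l₂)) :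
    Sched S' a l₁ ∧ Sched S' (a + l₁.length) l₂ := by
  induction l₁ generalizing a with
  | nil => exact ⟨trivial, by simpa using h⟩
  | cons m l ih =>
    obtain ⟨h1, h2⟩ := h
    obtain ⟨h3, h4⟩ := ih h2
    refine ⟨⟨h1, h3⟩, ?_⟩
    have : a + (m :: l).length = a + 1 + l.length := by simp; omega
    rwa [this]

lemma sched_of_getD (d : GMove V) :
    ∀ (l pre post : List (GMove V)),
      Sched (fun n => (pre ++ l ++ post).getD n d) pre.length l := by
  intro l
  induction l with
  | nil => intro pre post; trivial
  | cons m l ih =>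
    intro pre post
    constructor
    · show (pre ++ (m :: l) ++ post).getD pre.length d = m
      rw [List.append_assoc, List.getD_append_right _ _ _ _ le_rfl]
      simp
    · have h := ih (pre ++ [m]) post
      have he : (pre ++ [m]) ++ l ++ post = pre ++ (m :: l) ++ post := by simp
      have hl : (pre ++ [m]).length = pre.length + 1 := by simp
      rw [he, hl] at h
      exact h

end Aux3
section Aux4
variable {V : Type*} {G : SimpleGraph V} {S S' : ℕ → GMove V}

/-- The three auxiliary moves clearing the edge `s(p.1, p.2)` with one extra searcher. -/
def tripleP (p : V × V) : List (GMove V) := [.place p.1, .slide p.1 p.2, .remove p.2]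

/-- The legality condition of a single move. -/
def LegalAt (G : SimpleGraph V) (S' : ℕ → GMove V) (τ : ℕ) : Prop :=
  match S' τ with
  | .place _ => True
  | .remove v => 0 < occ S' τ v
  | .slide u v => G.Adj u v ∧ 0 < occ S' τ u

lemma legal_iff : Legal G S' ↔ ∀ τ, LegalAt G S' τ := Iff.rfl

lemma run_triples {t : ℕ} :
    ∀ (ps : List (V × V)) (a : ℕ) (M : Set (Sym2 V)),
    Sched S' a (ps.flatMap tripleP) →
    (∀ x, occ S' a x = occ S t x) →
    sn S' a = sn S t →
    edirty G S' a ⊆ (nEdgeDirty G S t ∪ Gd S t) \ M →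
    (∀ e ∈ M, e ∉ nEdgeDirty G S t) →
    (∀ p ∈ ps, G.Adj p.1 p.2 ∧ s(p.1, p.2) ∉ nEdgeDirty G S t) →
    (∀ x, occ S' (a + 3 * ps.length) x = occ S t x) ∧
    sn S' (a + 3 * ps.length) = sn S t ∧
    edirty G S' (a + 3 * ps.length) ⊆
      (nEdgeDirty G S t ∪ Gd S t) \ (M ∪ {e | ∃ p ∈ ps, e = s(p.1, p.2)}) ∧
    (∀ i, a ≤ i → i < a + 3 * ps.length → LegalAt G S' i ∧ sn S' i ≤ sn S t + 1) := by
  intro ps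
  induction ps with
  | nil =>
    intro a M hsch hocc hsn hsub hMN hps
    refine ⟨by simpa using hocc, by simpa using hsn, ?_, fun i h1 h2 => by
      simp only [List.length_nil, Nat.mul_zero, Nat.add_zero] at h2; omega⟩
    simp only [List.length_nil, Nat.mul_zero, Nat.add_zero]
    refine hsub.trans (Set.diff_subset_diff_right ?_)
    simp
  | cons wz ps ih =>
    intro a M hsch hocc hsn hsub hMN hps
    classical
    obtain ⟨w, z⟩ := wz
    rw [List.flatMap_cons] at hsch
    obtain ⟨hsch1, hsch2⟩ := sched_append hsch
    obtain ⟨hS0, hS1, hS2, -⟩ := hsch1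
    obtain ⟨hadj, hwzN⟩ := hps (w, z) List.mem_cons_self
    have hzw : z ≠ w := hadj.ne'
    -- occupancy along the triple
    have h1 : ∀ x, occ S' (a + 1) x = if x = w then occ S t x + 1 else occ S t x := by
      intro x
      rw [occ_succ_place hS0]
      simp only [hocc]
    have h2 : ∀ x, occ S' (a + 1 + 1) x = if x = z then occ S t x + 1 else occ S t x := by
      intro x
      rw [occ_succ_slide hS1]
      by_cases hxz : x = z
      · rw [if_pos hxz, if_pos hxz, h1, if_neg (by rw [hxz]; exact hzw)]
      · rw [if_neg hxz, if_neg hxz]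
        by_cases hxw : x = w
        · rw [if_pos hxw, h1, if_pos hxw]
          omega
        · rw [if_neg hxw, h1, if_neg hxw]
    have h3 : ∀ x, occ S' (a + 1 + 1 + 1) x = occ S t x := by
      intro x
      rw [occ_succ_remove hS2]
      by_cases hxz : x = z
      · rw [if_pos hxz, h2, if_pos hxz]
        omega
      · rw [if_neg hxz, h2, if_neg hxz]
    -- searcher counts
    have s1 : sn S' (a + 1) = sn S t + 1 := by rw [sn_succ_place hS0, hsn]
    have s2 : sn S' (a + 1 + 1) = sn S t + 1 := by rw [sn_succ_slide hS1, s1]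
    have s3 : sn S' (a + 1 + 1 + 1) = sn S t := by rw [sn_succ_remove hS2, s2]; omega
    -- dirty edges along the triple
    have hNsub : nEdgeDirty G S t ⊆ (nEdgeDirty G S t ∪ Gd S t) \ (M ∪ {s(w, z)}) := by
      intro e he
      refine ⟨Or.inl he, ?_⟩
      rintro (h | h)
      · exact hMN e h he
      · rw [h] at he
        exact hwzN he
    have d1 : edirty G S' (a + 1) ⊆ (nEdgeDirty G S t ∪ Gd S t) \ M := by
      refine (edirty_phase_step ?_ (hsub.trans Set.diff_subset)).trans ?_
      · intro x hx
        rw [h1] at hx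
        split at hx <;> omega
      · rintro e (he | he)
        · exact hsub he.1
        · exact ⟨(hNsub he).1, fun h => hMN e h he⟩
    have d2 : edirty G S' (a + 1 + 1) ⊆
        (nEdgeDirty G S t ∪ Gd S t) \ (M ∪ {s(w, z)}) := by
      refine (edirty_phase_step ?_ (d1.trans Set.diff_subset)).trans ?_
      · intro x hx
        rw [h2] at hx
        split at hx <;> omega
      · rintro e (⟨he, hetr⟩ | he)
        · refine ⟨(d1 he).1, ?_⟩
          rintro (h | h)
          · exact (d1 he).2 h
          · refine hetr ?_
            rw [hS1, h]
            rfl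
        · exact hNsub he
    have d3 : edirty G S' (a + 1 + 1 + 1) ⊆
        (nEdgeDirty G S t ∪ Gd S t) \ (M ∪ {s(w, z)}) := by
      refine (edirty_phase_step ?_ (d2.trans Set.diff_subset)).trans ?_
      · intro x hx
        rw [h3] at hx
        exact hx
      · rintro e (he | he)
        · exact d2 he.1
        · exact hNsub he
    -- legality of the triple
    have L0 : LegalAt G S' a := by simp [LegalAt, hS0]
    have L1 : LegalAt G S' (a + 1) := by
      simp only [LegalAt, hS1]
      refine ⟨hadj, ?_⟩
      rw [h1, if_pos rfl]
      omega
    have L2 : LegalAt G S' (a + 1 + 1) := by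
      simp only [LegalAt, hS2]
      rw [h2, if_pos rfl]
      omega
    -- recurse
    have harith : a + (tripleP (w, z)).length = a + 1 + 1 + 1 := by
      simp [tripleP]
    rw [harith] at hsch2
    obtain ⟨c1, c2, c3, c4⟩ := ih (a + 1 + 1 + 1) (M ∪ {s(w, z)}) hsch2 h3 s3 d3
      (by rintro e (he | he)
          · exact hMN e he
          · rw [Set.mem_singleton_iff] at he
            rw [he]
            exact hwzN)
      (fun p hp => hps p (List.mem_cons_of_mem _ hp))
    have hlen : a + 3 * ((w, z) :: ps).length = a + 1 + 1 + 1 + 3 * ps.length := by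
      simp [List.length_cons]
      omega
    rw [hlen]
    refine ⟨c1, c2, c3.trans (Set.diff_subset_diff_right ?_), ?_⟩
    · rintro e (he | ⟨p, hp, hep⟩)
      · exact Or.inl (Or.inl he)
      · rcases List.mem_cons.1 hp with rfl | hp'
        · exact Or.inl (Or.inr hep)
        · exact Or.inr ⟨p, hp', hep⟩
    · intro i hi1 hi2
      rcases Nat.lt_or_ge i (a + 1 + 1 + 1) with h | h
      · have hi : i = a ∨ i = a + 1 ∨ i = a + 1 + 1 := by omega
        rcases hi with rfl | rfl | rfl
        · exact ⟨L0, by omega⟩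
        · exact ⟨L1, by omega⟩
        · exact ⟨L2, by omega⟩
      · have := c4 i h (by omega)
        exact ⟨this.1, this.2⟩

end Aux4
section Aux5
variable {V : Type*} {G : SimpleGraph V} {S : ℕ → GMove V}

lemma length_flatMap_tripleP (ps : List (V × V)) :
    (ps.flatMap (tripleP (V := V))).length = 3 * ps.length := by
  induction ps with
  | nil => rfl
  | cons p ps ih =>
    rw [List.flatMap_cons, List.length_append, ih]
    simp [tripleP]
    omega

/-- The list of pairs `(w, z)` for the phase preceding the move `S t`:
if that move vacates `w`, all guarded neighbours `z` of `w` must be listed. -/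
noncomputable def pairsOf (G : SimpleGraph V) (S : ℕ → GMove V) (t : ℕ) : List (V × V) :=
  match S t with
  | .slide w _ =>
      ((show {z | G.Adj w z ∧ 0 < occ S t z}.Finite from
        (occ_support_finite S t).subset
          (fun _ hz => Nat.pos_iff_ne_zero.mp hz.2)).toFinset.toList).map (fun z => (w, z))
  | _ => []

lemma pairsOf_eq_nil_place {t : ℕ} {v : V} (hm : S t = .place v) : pairsOf G S t = [] := by
  simp [pairsOf, hm]

lemma pairsOf_eq_nil_remove {t : ℕ} {v : V} (hm : S t = .remove v) : pairsOf G S t = [] := by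
  simp [pairsOf, hm]

lemma mem_pairsOf_slide {t : ℕ} {w v : V} (hm : S t = .slide w v) {p : V × V} :
    p ∈ pairsOf G S t ↔ ∃ z, p = (w, z) ∧ G.Adj w z ∧ 0 < occ S t z := by
  simp only [pairsOf, hm, List.mem_map, Finset.mem_toList, Set.Finite.mem_toFinset,
    Set.mem_setOf_eq]
  constructor
  · rintro ⟨z, ⟨hadj, hocc⟩, rfl⟩
    exact ⟨z, rfl, hadj, hocc⟩
  · rintro ⟨z, rfl, hadj, hocc⟩
    exact ⟨z, ⟨hadj, hocc⟩, rfl⟩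

/-- The pairs of final cleanup: all guarded-guarded edges at the end of the search. -/
noncomputable def cpairsOf (G : SimpleGraph V) (S : ℕ → GMove V) (Tf : ℕ) : List (V × V) :=
  ((show {p : V × V | G.Adj p.1 p.2 ∧ 0 < occ S Tf p.1 ∧ 0 < occ S Tf p.2}.Finite from
      ((occ_support_finite S Tf).prod (occ_support_finite S Tf)).subset
      (fun p hp => Set.mem_prod.2
        ⟨Nat.pos_iff_ne_zero.mp hp.2.1, Nat.pos_iff_ne_zero.mp hp.2.2⟩)).toFinset).toList

lemma mem_cpairsOf {Tf : ℕ} {p : V × V} :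
    p ∈ cpairsOf G S Tf ↔ G.Adj p.1 p.2 ∧ 0 < occ S Tf p.1 ∧ 0 < occ S Tf p.2 := by
  simp [cpairsOf, Finset.mem_toList, Set.Finite.mem_toFinset, Set.mem_setOf_eq]

/-- The block of moves of the new search corresponding to one move of the old one. -/
noncomputable def blockOf (G : SimpleGraph V) (S : ℕ → GMove V) (t : ℕ) : List (GMove V) :=
  (pairsOf G S t).flatMap tripleP ++ [S t]

/-- The full move list of the new (edge-clearing) search. -/
noncomputable def progOf (G : SimpleGraph V) (S : ℕ → GMove V) (Tf : ℕ) : List (GMove V) :=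
  ((List.range Tf).flatMap (blockOf G S)) ++ (cpairsOf G S Tf).flatMap tripleP

/-- The new search schedule. -/
noncomputable def schedOf (G : SimpleGraph V) (S : ℕ → GMove V) (Tf : ℕ) : ℕ → GMove V :=
  fun n => (progOf G S Tf).getD n (S 0)

/-- Start time of block `t`. -/
noncomputable def posUpTo (G : SimpleGraph V) (S : ℕ → GMove V) (t : ℕ) : ℕ :=
  ((List.range t).flatMap (blockOf G S)).length

lemma posUpTo_succ (t : ℕ) :
    posUpTo G S (t + 1) = posUpTo G S t + (blockOf G S t).length := by
  simp [posUpTo, List.range_succ]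

lemma flatMap_range_prefix (f : ℕ → List (GMove V)) :
    ∀ v u, u ≤ v → ∃ post, (List.range v).flatMap f = (List.range u).flatMap f ++ post := by
  intro v
  induction v with
  | zero => intro u hu; exact ⟨[], by simp [Nat.le_zero.1 hu]⟩
  | succ v ih =>
    intro u hu
    rcases Nat.lt_or_ge u (v + 1) with h | h
    · obtain ⟨post, hpost⟩ := ih u (by omega)
      refine ⟨post ++ f v, ?_⟩
      rw [List.range_succ, List.flatMap_append, hpost]
      simp
    · have : u = v + 1 := by omega
      exact ⟨[], by simp [this]⟩

lemma sched_blockOf {Tf t : ℕ} (ht : t < Tf) :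
    Sched (schedOf G S Tf) (posUpTo G S t) (blockOf G S t) := by
  obtain ⟨post, hpost⟩ := flatMap_range_prefix (blockOf G S) Tf (t + 1) ht
  have hdec : progOf G S Tf =
      ((List.range t).flatMap (blockOf G S)) ++ blockOf G S t ++
        (post ++ (cpairsOf G S Tf).flatMap tripleP) := by
    rw [progOf, hpost, List.range_succ, List.flatMap_append]
    simp
  have h := sched_of_getD (S 0) (blockOf G S t)
    ((List.range t).flatMap (blockOf G S)) (post ++ (cpairsOf G S Tf).flatMap tripleP)
  rw [← hdec] at h
  exact h

lemma sched_cleanup {Tf : ℕ} :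
    Sched (schedOf G S Tf) (posUpTo G S Tf) ((cpairsOf G S Tf).flatMap tripleP) := by
  have h := sched_of_getD (S 0) ((cpairsOf G S Tf).flatMap tripleP)
    ((List.range Tf).flatMap (blockOf G S)) []
  rw [List.append_nil, ← progOf] at h
  exact h

lemma schedOf_pad {Tf n : ℕ} (hn : (progOf G S Tf).length ≤ n) :
    schedOf G S Tf n = S 0 := List.getD_eq_default _ _ hn

/-- transfer of occupancies across the base move. -/
lemma occ_base_transfer {S' : ℕ → GMove V} {t σ : ℕ} (hmv : S' σ = S t)
    (hocc : ∀ x, occ S' σ x = occ S t x) (x : V) :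
    occ S' (σ + 1) x = occ S (t + 1) x := by
  rcases hm : S t with v | v | ⟨w, v⟩
  · rw [occ_succ_place (hmv.trans hm), occ_succ_place hm]
    simp only [hocc]
  · rw [occ_succ_remove (hmv.trans hm), occ_succ_remove hm]
    simp only [hocc]
  · rw [occ_succ_slide (hmv.trans hm), occ_succ_slide hm]
    simp only [hocc]

lemma sn_base_transfer {S' : ℕ → GMove V} {t σ : ℕ} (hmv : S' σ = S t)
    (hsn : sn S' σ = sn S t) : sn S' (σ + 1) = sn S (t + 1) := by
  rcases hm : S t with v | v | ⟨w, v⟩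
  · rw [sn_succ_place (hmv.trans hm), sn_succ_place hm, hsn]
  · rw [sn_succ_remove (hmv.trans hm), sn_succ_remove hm, hsn]
  · rw [sn_succ_slide (hmv.trans hm), sn_succ_slide hm, hsn]

end Aux5
section Aux6
variable {V : Type*} {G : SimpleGraph V} {S : ℕ → GMove V}

lemma outer_invariant (hL : Legal G S) (hI : Internal S) {Tf K : ℕ}
    (hK : ∀ t ≤ Tf, sn S t ≤ K) :
    ∀ t, t ≤ Tf →
      (∀ x, occ (schedOf G S Tf) (posUpTo G S t) x = occ S t x) ∧
      sn (schedOf G S Tf) (posUpTo G S t) = sn S t ∧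
      edirty G (schedOf G S Tf) (posUpTo G S t) ⊆ nEdgeDirty G S t ∪ Gd S t ∧
      (∀ i, i < posUpTo G S t → LegalAt G (schedOf G S Tf) i) ∧
      (∀ i, i ≤ posUpTo G S t → sn (schedOf G S Tf) i ≤ K + 1) := by
  intro t
  induction t with
  | zero =>
    intro _
    have h0 : posUpTo G S 0 = 0 := by simp [posUpTo]
    rw [h0]
    refine ⟨fun x => rfl, rfl, ?_, fun i hi => absurd hi (by omega), ?_⟩
    · intro e he
      refine Or.inl ⟨he, ?_⟩
      induction e using Sym2.ind with
      | _ a b => exact ⟨a, Sym2.mem_mk_left a b, by simp [ndirty]⟩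
    · intro i hi
      have : i = 0 := by omega
      rw [this]
      show (0 : ℕ) ≤ K + 1
      omega
  | succ t ih =>
    intro ht1
    have ht : t < Tf := by omega
    obtain ⟨hoccA, hsnA, hsubA, hlegA, hsnbA⟩ := ih (by omega)
    have hsch := sched_blockOf (G := G) (S := S) ht
    rw [blockOf] at hsch
    obtain ⟨hsch1, hsch2⟩ := sched_append hsch
    have hps : ∀ p ∈ pairsOf G S t, G.Adj p.1 p.2 ∧ s(p.1, p.2) ∉ nEdgeDirty G S t := by
      intro p hp
      rcases hm : S t with v | v | ⟨w, v⟩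
      · rw [pairsOf_eq_nil_place hm] at hp
        exact absurd hp List.not_mem_nil
      · rw [pairsOf_eq_nil_remove hm] at hp
        exact absurd hp List.not_mem_nil
      · obtain ⟨z, rfl, hadj, hocz⟩ := (mem_pairsOf_slide hm).1 hp
        have hocw : 0 < occ S t w := by
          have := hL t
          rw [hm] at this
          exact this.2
        refine ⟨hadj, ?_⟩
        rintro ⟨-, c, hce, hcd⟩
        rcases Sym2.mem_iff.1 hce with rfl | rfl
        · exact guarded_not_ndirty hL hocw hcd
        · exact guarded_not_ndirty hL hocz hcd
    have hsubA' : edirty G (schedOf G S Tf) (posUpTo G S t) ⊆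
        (nEdgeDirty G S t ∪ Gd S t) \ (∅ : Set (Sym2 V)) := by
      rw [Set.diff_empty]
      exact hsubA
    obtain ⟨c1, c2, c3, c4⟩ := run_triples (pairsOf G S t) (posUpTo G S t) ∅ hsch1
      hoccA hsnA hsubA' (by simp) hps
    rw [length_flatMap_tripleP] at hsch2
    have hmv : schedOf G S Tf (posUpTo G S t + 3 * (pairsOf G S t).length) = S t := hsch2.1
    have hocc1 := fun x => occ_base_transfer hmv c1 x
    have hsn1 := sn_base_transfer hmv c2
    have hX : ∀ w v, S t = .slide w v → ∀ z, G.Adj w z → 0 < occ S t z →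
        s(w, z) ∉ edirty G (schedOf G S Tf) (posUpTo G S t + 3 * (pairsOf G S t).length) := by
      intro w v hm z hadj hocz he
      exact (c3 he).2 (Or.inr ⟨(w, z), (mem_pairsOf_slide hm).2 ⟨z, rfl, hadj, hocz⟩, rfl⟩)
    have hsub1 := edirty_base_step hmv (hI t) hocc1 (c3.trans Set.diff_subset) hX
    have hpos : posUpTo G S (t + 1) = posUpTo G S t + 3 * (pairsOf G S t).length + 1 := by
      rw [posUpTo_succ, blockOf, List.length_append, length_flatMap_tripleP]
      simp
      omega
    have Lσ : LegalAt G (schedOf G S Tf) (posUpTo G S t + 3 * (pairsOf G S t).length) := by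
      rcases hm : S t with v | v | ⟨w, v⟩
      · simp [LegalAt, hmv.trans hm]
      · exact absurd hm (hI t v)
      · have hl := hL t
        rw [hm] at hl
        simp only [LegalAt, hmv.trans hm]
        refine ⟨hl.1, ?_⟩
        rw [c1]
        exact hl.2
    rw [hpos]
    refine ⟨hocc1, hsn1, hsub1, ?_, ?_⟩
    · intro i hi
      rcases Nat.lt_or_ge i (posUpTo G S t) with h | h
      · exact hlegA i h
      · rcases Nat.lt_or_ge i (posUpTo G S t + 3 * (pairsOf G S t).length) with h2 | h2
        · exact (c4 i h h2).1
        · have : i = posUpTo G S t + 3 * (pairsOf G S t).length := by omega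
          rw [this]
          exact Lσ
    · intro i hi
      rcases Nat.lt_or_ge i (posUpTo G S t) with h | h
      · exact hsnbA i (by omega)
      · rcases Nat.lt_or_ge i (posUpTo G S t + 3 * (pairsOf G S t).length) with h2 | h2
        · have := (c4 i h h2).2
          have hKt := hK t (by omega)
          omega
        · rcases Nat.lt_or_ge i (posUpTo G S t + 3 * (pairsOf G S t).length + 1) with h3 | h3
          · have : i = posUpTo G S t + 3 * (pairsOf G S t).length := by omega
            rw [this, c2]
            have := hK t (by omega)
            omega
          · have : i = posUpTo G S t + 3 * (pairsOf G S t).length + 1 := by omega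
            rw [this, hsn1]
            have := hK (t + 1) (by omega)
            omega

end Aux6

/-- Given an internal monotone connected node-clearing search of `G` using at most
`K` searchers, there is an edge-clearing search of `G` using at most `K + 1`
searchers. -/
theorem stmt10 {V : Type*} (G : SimpleGraph V) (S : ℕ → GMove V) (hL : Legal G S)
    (hI : Internal S)
    (Tf : ℕ)
    (hM : ∀ t < Tf, ndirty G S (t + 1) ⊆ ndirty G S t)
    (hC : ∀ t : ℕ, 1 ≤ t → t ≤ Tf → (nclearSubgraph G S t).Connected)
    (hclear : ndirty G S Tf = ∅)
    (K : ℕ) (hK : ∀ t ≤ Tf, sn S t ≤ K) :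
    ∃ (S' : ℕ → GMove V) (Tf' : ℕ), Legal G S' ∧ edirty G S' Tf' = ∅ ∧
      ∀ t ≤ Tf', sn S' t ≤ K + 1 := by
  obtain ⟨hoccA, hsnA, hsubA, hlegA, hsnbA⟩ := outer_invariant hL hI hK Tf le_rfl
  have hN0 : nEdgeDirty G S Tf = ∅ := by
    ext e
    simp [nEdgeDirty, hclear]
  have hps : ∀ p ∈ cpairsOf G S Tf, G.Adj p.1 p.2 ∧ s(p.1, p.2) ∉ nEdgeDirty G S Tf := by
    intro p hp
    refine ⟨(mem_cpairsOf.1 hp).1, ?_⟩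
    rw [hN0]
    exact Set.notMem_empty _
  have hsubA' : edirty G (schedOf G S Tf) (posUpTo G S Tf) ⊆
      (nEdgeDirty G S Tf ∪ Gd S Tf) \ (∅ : Set (Sym2 V)) := by
    rw [Set.diff_empty]
    exact hsubA
  obtain ⟨c1, c2, c3, c4⟩ := run_triples (cpairsOf G S Tf) (posUpTo G S Tf) ∅
    sched_cleanup hoccA hsnA hsubA' (by simp) hps
  have hlenprog : (progOf G S Tf).length =
      posUpTo G S Tf + 3 * (cpairsOf G S Tf).length := by
    rw [progOf, List.length_append, length_flatMap_tripleP]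
    rfl
  refine ⟨schedOf G S Tf, posUpTo G S Tf + 3 * (cpairsOf G S Tf).length, ?_, ?_, ?_⟩
  · -- legality
    rw [legal_iff]
    intro τ
    rcases Nat.lt_or_ge τ (posUpTo G S Tf) with h | h
    · exact hlegA τ h
    · rcases Nat.lt_or_ge τ (posUpTo G S Tf + 3 * (cpairsOf G S Tf).length) with h2 | h2
      · exact (c4 τ h h2).1
      · have hpad : schedOf G S Tf τ = S 0 := schedOf_pad (by omega)
        rcases h0 : S 0 with v | v | ⟨u, v⟩
        · simp [LegalAt, hpad, h0]
        · exact absurd h0 (hI 0 v)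
        · exfalso
          have := hL 0
          rw [h0] at this
          have h2 := this.2
          simp [occ] at h2
  · -- all edges are eventually e-clear
    rw [Set.eq_empty_iff_forall_notMem]
    intro e he
    have h1 : e ∈ G.edgeSet := edirty_subset_edgeSet _ he
    have h2 := c3 he
    rcases h2.1 with hN | hGd
    · rw [hN0] at hN
      exact hN
    · revert h1 h2 hGd
      induction e using Sym2.ind with
      | _ a b =>
        intro h1 h2 hGd
        exact h2.2 (Or.inr ⟨(a, b), mem_cpairsOf.2 ⟨G.mem_edgeSet.1 h1,
          hGd a (Sym2.mem_mk_left a b), hGd b (Sym2.mem_mk_right a b)⟩, rfl⟩)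
  · -- searcher bound
    intro τ hτ
    rcases Nat.lt_or_ge τ (posUpTo G S Tf) with h | h
    · exact hsnbA τ (by omega)
    · rcases Nat.lt_or_ge τ (posUpTo G S Tf + 3 * (cpairsOf G S Tf).length) with h2 | h2
      · have := (c4 τ h h2).2
        have := hK Tf le_rfl
        omega
      · have : τ = posUpTo G S Tf + 3 * (cpairsOf G S Tf).length := by omega
        rw [this, c2]
        have := hK Tf le_rfl
        omega
end

section
/- Given a graph G and an internal search schedule S, at every time step t the set of n-clear nodes equals the set of m-clear nodes and the set of n-clear edges equals the set of m-clear edges, where m refers to the mixed edge search game. In particular, node search and mixed edge search are equivalent. -/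
open SimpleGraph

variable {V : Type*}

/-- Node search and mixed edge search are equivalent: for an internal schedule, at
every time the n-dirty node set equals the m-dirty node set, and the n-dirty edge
set equals the m-dirty edge set (equivalently, the clear sets coincide). -/
theorem stmt11 {V : Type*} (G : SimpleGraph V) (hconn : G.Connected)
    (hne : G.edgeSet.Nonempty) (S : ℕ → GMove V) (hL : Legal G S) (hI : Internal S) :
    ∀ t : ℕ, ndirty G S t = mdirtyNode G S t ∧ nEdgeDirty G S t = mdirty G S t := by

  classical
  have hnbr : ∀ v : V, ∃ u, G.Adj v u := by
    obtain ⟨e, he⟩ := hne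
    induction e using Sym2.ind with
    | _ a b =>
      have hab : G.Adj a b := he
      intro v
      obtain ⟨p⟩ := hconn.preconnected v a
      cases p with
      | nil => exact ⟨b, hab⟩
      | cons h _ => exact ⟨_, h⟩
  have hnd0 : ∀ t (v : V), v ∈ ndirty G S t → occ S t v = 0 := by
    intro t v hv
    cases t with
    | zero => rfl
    | succ t =>
      obtain ⟨w, _, p, hp⟩ := hv
      exact hp v p.start_mem_support
  have hsym : ∀ (e : Sym2 V), e ∈ G.edgeSet → ∀ v ∈ e, ∃ u, G.Adj v u ∧ e = s(v, u) := by
    intro e he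
    induction e using Sym2.ind with
    | _ a b =>
      intro v hv
      rw [Sym2.mem_iff] at hv
      rcases hv with h | h
      · exact ⟨b, by rw [h]; exact he, by rw [h]⟩
      · exact ⟨a, by rw [h]; exact ((he : G.Adj a b)).symm, by rw [h]; exact Sym2.eq_swap⟩
  intro t
  induction t with
  | zero =>
    constructor
    · ext v
      simp only [ndirty, Set.mem_univ, mdirtyNode, mdirty, Set.mem_setOf_eq, true_iff]
      obtain ⟨u, hu⟩ := hnbr v
      exact ⟨rfl, s(v, u), hu, Sym2.mem_mk_left v u⟩
    · ext e
      simp only [nEdgeDirty, mdirty, ndirty, Set.mem_setOf_eq, Set.mem_univ, and_true]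
      constructor
      · exact fun h => h.1
      · intro h
        refine ⟨h, ?_⟩
        induction e using Sym2.ind with
        | _ a b => exact ⟨a, Sym2.mem_mk_left a b⟩
  | succ t IH =>
    obtain ⟨IHn, IHe⟩ := IH
    have key : ∀ f ∈ mdirty G S t, (S t).traversed ≠ some f →
        ∀ u ∈ f, occ S (t + 1) u = 0 → u ∈ ndirty G S (t + 1) := by
      intro f hf htrav u hu hu1
      have hf' : f ∈ nEdgeDirty G S t := IHe ▸ hf
      obtain ⟨hfE, w0, hw0f, hw0⟩ := hf'
      have hw0occ : occ S t w0 = 0 := hnd0 t w0 hw0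
      by_cases hut : occ S t u = 0
      · have hu' : u ∈ ndirty G S t := by
          rw [IHn]; exact ⟨hut, f, hf, hu⟩
        refine ⟨u, hu', Walk.nil, ?_⟩
        intro x hx
        simp only [Walk.support_nil, List.mem_singleton] at hx
        subst hx; exact hu1
      · cases hS : S t with
        | place v =>
          exfalso
          simp only [occ, hS] at hu1
          split at hu1 <;> omega
        | remove v => exact absurd hS (hI t v)
        | slide c d =>
          have hocc : (if u = d then occ S t u + 1 else if u = c then occ S t u - 1
              else occ S t u) = 0 := by
            simpa only [occ, hS] using hu1
          have hud : u ≠ d := by intro h; rw [if_pos h] at hocc; omega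
          have huc : u = c := by
            by_contra h
            rw [if_neg hud, if_neg h] at hocc; exact hut hocc
          subst huc
          have hw0u : w0 ≠ u := fun h => hut (h ▸ hw0occ)
          have hfeq : f = s(u, w0) := by
            induction f using Sym2.ind with
            | _ a b =>
              rw [Sym2.mem_iff] at hu hw0f
              rcases hu with rfl | rfl
              · rcases hw0f with rfl | rfl
                · exact absurd rfl hw0u
                · rfl
              · rcases hw0f with rfl | rfl
                · exact Sym2.eq_swap
                · exact absurd rfl hw0u
          have hdw0 : d ≠ w0 := by
            intro h
            exact htrav (by simp [GMove.traversed, hS, hfeq, h])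
          have hw0occ1 : occ S (t + 1) w0 = 0 := by
            simp only [occ, hS, if_neg (Ne.symm hdw0 : ¬ w0 = d), if_neg hw0u]
            exact hw0occ
          have hadj : G.Adj u w0 := by rw [hfeq] at hfE; exact hfE
          refine ⟨w0, hw0, Walk.cons hadj Walk.nil, ?_⟩
          intro x hx
          simp only [Walk.support_cons, Walk.support_nil, List.mem_cons,
            List.not_mem_nil, or_false] at hx
          rcases hx with rfl | rfl
          · exact hu1
          · exact hw0occ1
    have ntrav : ∀ w : V, occ S t w = 0 → occ S (t + 1) w = 0 →
        ∀ f : Sym2 V, w ∈ f → (S t).traversed ≠ some f := by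
      intro w hw0 hw1 f hwf htr
      cases hS : S t with
      | place v => rw [hS] at htr; simp [GMove.traversed] at htr
      | remove v => exact hI t v hS
      | slide c d =>
        rw [hS] at htr
        simp only [GMove.traversed, Option.some.injEq] at htr
        have hleg := hL t
        rw [hS] at hleg
        have hc : 0 < occ S t c := hleg.2
        have hwcd : w = c ∨ w = d := by rw [← htr] at hwf; exact Sym2.mem_iff.mp hwf
        rcases hwcd with rfl | rfl
        · omega
        · have h2 : occ S (t + 1) w = if w = w then occ S t w + 1
              else if w = c then occ S t w - 1 else occ S t w := by
            simp only [occ, hS]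
          rw [if_pos rfl] at h2
          omega
    have hedge : nEdgeDirty G S (t + 1) = mdirty G S (t + 1) := by
      ext e
      constructor
      · rintro ⟨heE, a, hae, ha⟩
        obtain ⟨b, hab, heq⟩ := hsym e heE a hae
        obtain ⟨w, hw, p, hp⟩ := ha
        have hwm : w ∈ mdirtyNode G S t := IHn ▸ hw
        obtain ⟨hwt0, f, hfmd, hwf⟩ := hwm
        have hfE : f ∈ G.edgeSet := (show f ∈ nEdgeDirty G S t from IHe ▸ hfmd).1
        obtain ⟨w', hww', hfeq⟩ := hsym f hfE w hwf
        have hw1 : occ S (t + 1) w = 0 := hp w p.end_mem_support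
        have htrav : (S t).traversed ≠ some f := ntrav w hwt0 hw1 f hwf
        simp only [mdirty, Set.mem_union, Set.mem_setOf_eq]
        refine Or.inr ⟨b, a, w, w', ?_, hab.symm, hww', ⟨?_, ?_, ?_⟩, p, hp⟩
        · rw [heq, Sym2.eq_swap]
        · rw [← hfeq]; exact hfmd
        · rw [← hfeq]; exact htrav
        · intro hall
          have := hall w (Sym2.mem_mk_left w w')
          omega
      · intro he
        simp only [mdirty, Set.mem_union, Set.mem_diff, Set.mem_setOf_eq,
          Set.mem_union] at he
        rcases he with ⟨hemd, hnot⟩ | ⟨x, y, q, q', heq, hxy, hqq', ⟨hqmd, hqtrav, hqng⟩, p, hp⟩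
        · have htrav : (S t).traversed ≠ some e := fun h => hnot (Or.inl h)
          have hng : ¬ ∀ v ∈ e, 0 < occ S (t + 1) v := fun h => hnot (Or.inr h)
          push_neg at hng
          obtain ⟨v, hve, hv0⟩ := hng
          have hv0' : occ S (t + 1) v = 0 := by omega
          have heE : e ∈ G.edgeSet := (show e ∈ nEdgeDirty G S t from IHe ▸ hemd).1
          exact ⟨heE, v, hve, key e hemd htrav v hve hv0'⟩
        · have hq1 : occ S (t + 1) q = 0 := hp q p.end_mem_support
          obtain ⟨w, hw, p2, hp2⟩ := key s(q, q') hqmd hqtrav q (Sym2.mem_mk_left q q') hq1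
          refine ⟨?_, y, ?_, w, hw, p.append p2, ?_⟩
          · rw [heq]; exact hxy
          · rw [heq]; exact Sym2.mem_mk_right x y
          · intro z hz
            rcases (Walk.mem_support_append_iff _ _).mp hz with h | h
            · exact hp z h
            · exact hp2 z h
    refine ⟨?_, hedge⟩
    ext v
    simp only [mdirtyNode, Set.mem_setOf_eq]
    constructor
    · intro hv
      obtain ⟨w, hw, p, hp⟩ := hv
      have hv0 : occ S (t + 1) v = 0 := hp v p.start_mem_support
      obtain ⟨u, hu⟩ := hnbr v
      refine ⟨hv0, s(v, u), ?_, Sym2.mem_mk_left v u⟩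
      rw [← hedge]
      exact ⟨hu, v, Sym2.mem_mk_left v u, ⟨w, hw, p, hp⟩⟩
    · rintro ⟨hv0, e, hemd, hve⟩
      have he' : e ∈ nEdgeDirty G S (t + 1) := hedge ▸ hemd
      obtain ⟨heE, w, hwe, hw⟩ := he'
      by_cases hvw : v = w
      · exact hvw ▸ hw
      · obtain ⟨u, hvu, heq⟩ := hsym e heE v hve
        have hwu : w = u := by
          rw [heq, Sym2.mem_iff] at hwe
          rcases hwe with h | h
          · exact absurd h.symm hvw
          · exact h
        subst hwu
        obtain ⟨w', hw', p, hp⟩ := hw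
        refine ⟨w', hw', Walk.cons hvu p, ?_⟩
        intro z hz
        rw [Walk.support_cons, List.mem_cons] at hz
        rcases hz with rfl | hz
        · exact hv0
        · exact hp z hz
end
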